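/- Let M be a symmetric positive definite matrix, L > 0, ε > 0, and suppose θ_i satisfies the ε-perturbed critical-point equation (θ_i − θ_{γ})/δ − v + δ·M⁻¹·∇P̄(θ_i) = r with ‖M r/δ‖ ≤ ε, where P̄ is L-weakly convex and twice differentiable. Define the Hamiltonians H_i = (1/2)‖(θ_i − θ_γ)/δ‖²_M + P̄(θ_i) and H_γ = (1/2)‖v‖²_M + P̄(θ_γ). Then H_i − H_γ ≤ ((Lδ² + δ)/(2σ_min(M)))·‖(θ_i − θ_γ)/δ‖²_M + δε²/2. -/

import Mathlib

open Matrix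

/-- One-step Hamiltonian bound at an `ε`-critical point of the implicit Euler
optimization, for an `L`-weakly convex potential. -/
theorem stmt7 {n : ℕ} (M : Matrix (Fin n) (Fin n) ℝ) (hMsymm : M.IsSymm)
    (σ : ℝ) (hσ : 0 < σ)
    (hMlb : ∀ x : Fin n → ℝ, σ * (x ⬝ᵥ x) ≤ x ⬝ᵥ (M *ᵥ x))
    (P : (Fin n → ℝ) → ℝ) (gradP : (Fin n → ℝ) → (Fin n → ℝ)) (L : ℝ) (hL : 0 < L)
    (hweak : ∀ x y : Fin n → ℝ,
      P y - P x - ((y - x) ⬝ᵥ gradP y) ≤ L / 2 * ((y - x) ⬝ᵥ (y - x)))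
    (ε δ : ℝ) (hε : 0 < ε) (hδ : 0 < δ)
    (θi θγ v r : Fin n → ℝ)
    (heq : δ⁻¹ • (θi - θγ) - v + δ • (M⁻¹ *ᵥ gradP θi) = r)
    (hr : Real.sqrt ((M *ᵥ r) ⬝ᵥ (M *ᵥ r)) / δ ≤ ε) :
    ((1 : ℝ) / 2 * ((δ⁻¹ • (θi - θγ)) ⬝ᵥ (M *ᵥ (δ⁻¹ • (θi - θγ)))) + P θi) -
    ((1 : ℝ) / 2 * (v ⬝ᵥ (M *ᵥ v)) + P θγ) ≤
      (L * δ ^ 2 + δ) / (2 * σ) *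
        ((δ⁻¹ • (θi - θγ)) ⬝ᵥ (M *ᵥ (δ⁻¹ • (θi - θγ)))) + δ * ε ^ 2 / 2 := by
  have hδ' : δ ≠ 0 := ne_of_gt hδ
  set w : Fin n → ℝ := δ⁻¹ • (θi - θγ) with hw
  have hθ : θi - θγ = δ • w := by
    rw [hw, smul_smul, mul_inv_cancel₀ hδ', one_smul]
  -- symmetry of the bilinear form
  have hsym : ∀ x y : Fin n → ℝ, x ⬝ᵥ (M *ᵥ y) = y ⬝ᵥ (M *ᵥ x) := by
    intro x y
    rw [Matrix.dotProduct_mulVec, ← Matrix.mulVec_transpose, hMsymm.eq, dotProduct_comm]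
  -- positivity
  have hdn : ∀ x : Fin n → ℝ, (0:ℝ) ≤ x ⬝ᵥ x := fun x =>
    Finset.sum_nonneg fun i _ => mul_self_nonneg _
  have hpos : ∀ x : Fin n → ℝ, 0 ≤ x ⬝ᵥ (M *ᵥ x) := by
    intro x
    refine le_trans ?_ (hMlb x)
    have : (0:ℝ) ≤ x ⬝ᵥ x := hdn x
    positivity
  -- M is invertible
  have hposdef : M.PosDef := by
    refine Matrix.posDef_iff_dotProduct_mulVec.mpr ⟨?_, ?_⟩
    · rw [Matrix.IsHermitian, Matrix.conjTranspose_eq_transpose_of_trivial]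
      exact hMsymm
    · intro x hx
      have h1 : 0 < x ⬝ᵥ x := by
        rcases lt_or_eq_of_le (hdn x) with h | h
        · exact h
        · exact absurd (dotProduct_self_eq_zero.mp h.symm) hx
      have := hMlb x
      simp only [star_trivial]
      nlinarith
  have hMinv : M * M⁻¹ = 1 := Matrix.mul_nonsing_inv M (isUnit_iff_ne_zero.mpr hposdef.det_pos.ne')
  -- multiply the equation by M
  have heq2 : M *ᵥ w - M *ᵥ v + δ • gradP θi = M *ᵥ r := by
    have h := congrArg (fun u => M *ᵥ u) heq
    simpa [Matrix.mulVec_add, Matrix.mulVec_sub, Matrix.mulVec_smul, Matrix.mulVec_mulVec,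
      hMinv, Matrix.one_mulVec] using h
  -- scalar abbreviations
  set a : ℝ := w ⬝ᵥ (M *ᵥ w) with ha
  set b : ℝ := v ⬝ᵥ (M *ᵥ v) with hb
  set c : ℝ := w ⬝ᵥ (M *ᵥ v) with hc
  set d : ℝ := w ⬝ᵥ (M *ᵥ r) with hd
  set s : ℝ := w ⬝ᵥ w with hs
  have hs0 : (0:ℝ) ≤ s := hdn w
  have hsa : σ * s ≤ a := hMlb w
  -- weak convexity bound
  have hP : P θi - P θγ ≤ (d - a + c) + L / 2 * (δ ^ 2 * s) := by
    have h := hweak θγ θi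
    have h1 : (θi - θγ) ⬝ᵥ gradP θi = d - a + c := by
      have h2 : δ • gradP θi = M *ᵥ r - M *ᵥ w + M *ᵥ v := by
        rw [← heq2]; abel
      have h3 : (θi - θγ) ⬝ᵥ gradP θi = w ⬝ᵥ (δ • gradP θi) := by
        rw [hθ, smul_dotProduct, dotProduct_smul]
      rw [h3, h2]
      simp only [dotProduct_add, dotProduct_sub, ha, hc, hd]
    have h4 : (θi - θγ) ⬝ᵥ (θi - θγ) = δ ^ 2 * s := by
      rw [hθ, smul_dotProduct, dotProduct_smul, hs, smul_eq_mul, smul_eq_mul]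
      ring
    rw [h1, h4] at h
    linarith
  -- cross term bound: c ≤ (a + b)/2
  have hcross : (0:ℝ) ≤ a - 2 * c + b := by
    have h := hpos (w - v)
    have hexp : (w - v) ⬝ᵥ (M *ᵥ (w - v)) = a - 2 * c + b := by
      rw [Matrix.mulVec_sub, sub_dotProduct, dotProduct_sub,
        dotProduct_sub, hsym v w]
      ring
    linarith [hexp ▸ h]
  -- Cauchy–Schwarz bound on d
  have hdbound : d ≤ δ / 2 * s + δ / 2 * ε ^ 2 := by
    set u : Fin n → ℝ := M *ᵥ r with hu
    set t : ℝ := u ⬝ᵥ u with ht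
    have ht0 : (0:ℝ) ≤ t := hdn u
    have hcs : d ^ 2 ≤ s * t := by
      have := Finset.sum_mul_sq_le_sq_mul_sq Finset.univ w u
      simpa [hd, hs, ht, dotProduct, sq] using this
    have hst : Real.sqrt t ≤ δ * ε := by
      have := (div_le_iff₀ hδ).mp hr
      linarith
    have hds : d ≤ Real.sqrt s * Real.sqrt t := by
      have h1 : d ≤ |d| := le_abs_self d
      have h2 : |d| = Real.sqrt (d ^ 2) := (Real.sqrt_sq_eq_abs d).symm
      have h3 : Real.sqrt (d ^ 2) ≤ Real.sqrt (s * t) := Real.sqrt_le_sqrt hcs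
      rw [Real.sqrt_mul hs0] at h3
      linarith
    have h4 : Real.sqrt s * Real.sqrt t ≤ Real.sqrt s * (δ * ε) := by
      have := Real.sqrt_nonneg s
      nlinarith
    have h5 : Real.sqrt s * (δ * ε) ≤ δ / 2 * s + δ / 2 * ε ^ 2 := by
      have h6 : (Real.sqrt s) ^ 2 = s := Real.sq_sqrt hs0
      nlinarith [sq_nonneg (Real.sqrt s - ε)]
    linarith
  -- combine
  have hLδ : 0 < L * δ ^ 2 + δ := by positivity
  have hfinal : (L * δ ^ 2 + δ) / 2 * s ≤ (L * δ ^ 2 + δ) / (2 * σ) * a := by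
    rw [div_mul_eq_mul_div, div_mul_eq_mul_div, div_le_div_iff₀ (by norm_num) (by positivity)]
    nlinarith
  nlinarith
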